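/- The map f : ℝ³ → ℝ⁴ defined by f(x,y,z) = cosh(z)•(xy+1, x+y/2, xy, x-y/2) - sinh(z)•(xy, x-y/2, xy+1, x+y/2) is an immersion, i.e., its differential has rank 3 at every point of ℝ³. -/

import Mathlib

noncomputable def Xc : (ℝ × ℝ × ℝ) →L[ℝ] ℝ := ContinuousLinearMap.fst ℝ ℝ (ℝ × ℝ)
noncomputable def Yc : (ℝ × ℝ × ℝ) →L[ℝ] ℝ :=
  (ContinuousLinearMap.fst ℝ ℝ ℝ).comp (ContinuousLinearMap.snd ℝ ℝ (ℝ × ℝ))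
noncomputable def Zc : (ℝ × ℝ × ℝ) →L[ℝ] ℝ :=
  (ContinuousLinearMap.snd ℝ ℝ ℝ).comp (ContinuousLinearMap.snd ℝ ℝ (ℝ × ℝ))

@[simp] lemma Xc_apply (v : ℝ × ℝ × ℝ) : Xc v = v.1 := rfl
@[simp] lemma Yc_apply (v : ℝ × ℝ × ℝ) : Yc v = v.2.1 := rfl
@[simp] lemma Zc_apply (v : ℝ × ℝ × ℝ) : Zc v = v.2.2 := rfl

/-- The example hypersurface `f(x,y,z) = cosh z • (xy+1, x+y/2, xy, x-y/2)
- sinh z • (xy, x-y/2, xy+1, x+y/2)`. -/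
noncomputable def exF : ℝ × ℝ × ℝ → (Fin 4 → ℝ) := fun p =>
  Real.cosh p.2.2 • (![p.1 * p.2.1 + 1, p.1 + p.2.1 / 2, p.1 * p.2.1, p.1 - p.2.1 / 2])
    - Real.sinh p.2.2 • (![p.1 * p.2.1, p.1 - p.2.1 / 2, p.1 * p.2.1 + 1, p.1 + p.2.1 / 2])

/-- `exF` is an immersion: its differential has rank 3 (is injective)
at every point of `ℝ³`. -/
theorem stmt10 (p : ℝ × ℝ × ℝ) :
    ∃ D : (ℝ × ℝ × ℝ) →L[ℝ] (Fin 4 → ℝ), HasFDerivAt exF D p ∧ Function.Injective D := by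
  obtain ⟨x, y, z⟩ := p
  set c := Real.cosh z with hcdef
  set s := Real.sinh z with hsdef
  have hx : HasFDerivAt (fun q : ℝ × ℝ × ℝ => q.1) Xc (x, y, z) := Xc.hasFDerivAt
  have hy : HasFDerivAt (fun q : ℝ × ℝ × ℝ => q.2.1) Yc (x, y, z) := Yc.hasFDerivAt
  have hz : HasFDerivAt (fun q : ℝ × ℝ × ℝ => q.2.2) Zc (x, y, z) := Zc.hasFDerivAt
  have hc : HasFDerivAt (fun q : ℝ × ℝ × ℝ => Real.cosh q.2.2) (s • Zc) (x, y, z) :=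
    ((Real.hasDerivAt_cosh z).comp_hasFDerivAt (x, y, z) hz :)
  have hs : HasFDerivAt (fun q : ℝ × ℝ × ℝ => Real.sinh q.2.2) (c • Zc) (x, y, z) :=
    ((Real.hasDerivAt_sinh z).comp_hasFDerivAt (x, y, z) hz :)
  have hxy := hx.mul hy
  have hy2 : HasFDerivAt (fun q : ℝ × ℝ × ℝ => q.2.1 * (1 / 2)) ((1 / 2 : ℝ) • Yc) (x, y, z) := by
    simpa using hy.mul_const (1 / 2 : ℝ)
  set E : Fin 4 → ((ℝ × ℝ × ℝ) →L[ℝ] ℝ) :=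
    ![((c - s) * y) • Xc + ((c - s) * x) • Yc + (s * (x * y + 1) - c * (x * y)) • Zc,
      (c - s) • Xc + ((c + s) / 2) • Yc + (s * (x + y / 2) - c * (x - y / 2)) • Zc,
      ((c - s) * y) • Xc + ((c - s) * x) • Yc + (s * (x * y) - c * (x * y + 1)) • Zc,
      (c - s) • Xc + (-((c + s) / 2)) • Yc + (s * (x - y / 2) - c * (x + y / 2)) • Zc] with hE
  refine ⟨ContinuousLinearMap.pi E, ?_, ?_⟩
  · have h0 : HasFDerivAt (fun q : ℝ × ℝ × ℝ => exF q 0) (E 0) (x, y, z) := by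
      have h := (hc.mul (hxy.add_const 1)).sub (hs.mul hxy)
      have heq : (fun q : ℝ × ℝ × ℝ => exF q 0)
          = fun q : ℝ × ℝ × ℝ => Real.cosh q.2.2 * (q.1 * q.2.1 + 1)
              - Real.sinh q.2.2 * (q.1 * q.2.1) := by
        funext q; simp [exF]
      rw [heq]
      refine h.congr_fderiv (ContinuousLinearMap.ext fun v => ?_)
      simp [hE]; ring
    have h1 : HasFDerivAt (fun q : ℝ × ℝ × ℝ => exF q 1) (E 1) (x, y, z) := by
      have h := (hc.mul (hx.add hy2)).sub (hs.mul (hx.sub hy2))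
      have heq : (fun q : ℝ × ℝ × ℝ => exF q 1)
          = fun q : ℝ × ℝ × ℝ => Real.cosh q.2.2 * (q.1 + q.2.1 * (1 / 2))
              - Real.sinh q.2.2 * (q.1 - q.2.1 * (1 / 2)) := by
        funext q; simp [exF]; ring
      rw [heq]
      refine h.congr_fderiv (ContinuousLinearMap.ext fun v => ?_)
      simp [hE]; ring
    have h2 : HasFDerivAt (fun q : ℝ × ℝ × ℝ => exF q 2) (E 2) (x, y, z) := by
      have h := (hc.mul hxy).sub (hs.mul (hxy.add_const 1))
      have heq : (fun q : ℝ × ℝ × ℝ => exF q 2)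
          = fun q : ℝ × ℝ × ℝ => Real.cosh q.2.2 * (q.1 * q.2.1)
              - Real.sinh q.2.2 * (q.1 * q.2.1 + 1) := by
        funext q; simp [exF]
      rw [heq]
      refine h.congr_fderiv (ContinuousLinearMap.ext fun v => ?_)
      simp [hE]; ring
    have h3 : HasFDerivAt (fun q : ℝ × ℝ × ℝ => exF q 3) (E 3) (x, y, z) := by
      have h := (hc.mul (hx.sub hy2)).sub (hs.mul (hx.add hy2))
      have heq : (fun q : ℝ × ℝ × ℝ => exF q 3)
          = fun q : ℝ × ℝ × ℝ => Real.cosh q.2.2 * (q.1 - q.2.1 * (1 / 2))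
              - Real.sinh q.2.2 * (q.1 + q.2.1 * (1 / 2)) := by
        funext q; simp [exF]; ring
      rw [heq]
      refine h.congr_fderiv (ContinuousLinearMap.ext fun v => ?_)
      simp [hE]; ring
    refine hasFDerivAt_pi.2 ?_
    intro i
    fin_cases i
    exacts [h0, h1, h2, h3]
  · -- injectivity
    have hpos1 : 0 < c + s := by rw [hcdef, hsdef, Real.cosh_add_sinh]; exact Real.exp_pos z
    have hpos2 : 0 < c - s := by rw [hcdef, hsdef, Real.cosh_sub_sinh]; exact Real.exp_pos (-z)
    suffices H : ∀ u : ℝ × ℝ × ℝ, ContinuousLinearMap.pi E u = 0 → u = 0 by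
      intro v w hvw
      have h1 : ContinuousLinearMap.pi E (v - w) = 0 := by rw [map_sub, hvw, sub_self]
      exact sub_eq_zero.mp (H _ h1)
    rintro ⟨a, b, t⟩ hu
    have e0 := congrFun hu 0
    have e1 := congrFun hu 1
    have e2 := congrFun hu 2
    have e3 := congrFun hu 3
    simp [hE, ContinuousLinearMap.pi_apply] at e0 e1 e2 e3
    have ht : t * (s + c) = 0 := by linear_combination e0 - e2
    have ht0 : t = 0 := by
      rcases mul_eq_zero.mp ht with h | h
      · exact h
      · linarith
    subst ht0
    have ha : (2 * (c - s)) * a = 0 := by linear_combination e1 + e3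
    have ha0 : a = 0 := by
      rcases mul_eq_zero.mp ha with h | h
      · linarith
      · exact h
    subst ha0
    have hb : (c + s) * b = 0 := by linear_combination e1 - e3
    have hb0 : b = 0 := by
      rcases mul_eq_zero.mp hb with h | h
      · linarith
      · exact h
    subst hb0
    rfl
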